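/- Under the (A,B) signGD dynamics, suppose that at some time t one has |B(t)| < |A(t)| < a/3 (the stationary subpartition R₃₁). Then for every i ∈ ℕ: A(t + 2i) = A(t), A(t + 2i + 1) = A(t) − sgn(A(t))·a, and B(t') = B(t) for all t' ≥ t; in particular A(t') alternates sign with period 2 and |A(t')| ≤ a for all t' ≥ t, while B remains constant. -/
import Mathlib


/-- The frequency-domain `(A,B)` signGD error dynamics with `a = σ₀²η`, `b = σ₁²η`:
`A(t+1) = A(t) − (a/3)(sgn(A+B) + sgn(A) + sgn(A−B))` and
`B(t+1) = B(t) − (b/2)(sgn(A+B) − sgn(A−B))`. -/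
def SignGDDyn (σ0sq σ1sq η : ℝ) (A B : ℕ → ℝ) : Prop :=
  (∀ t, A (t+1) = A t - σ0sq * η / 3 *
      (Real.sign (A t + B t) + Real.sign (A t) + Real.sign (A t - B t))) ∧
  (∀ t, B (t+1) = B t - σ1sq * η / 2 *
      (Real.sign (A t + B t) - Real.sign (A t - B t)))

/-- In the stationary subpartition `R₃₁` (`|B(t)| < |A(t)| < a/3`): `A` is
2-periodic, alternating between `A(t)` and `A(t) − sgn(A(t))·a` with alternating
signs and `|A(t')| ≤ a`, while `B` stays constant, for all later times. -/
theorem signGD_stationary_R31 (σ0sq σ1sq η : ℝ)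
    (h0 : 0 < σ0sq) (h1 : 0 < σ1sq) (hη : 0 < η)
    (A B : ℕ → ℝ) (hdyn : SignGDDyn σ0sq σ1sq η A B) (t : ℕ)
    (hBA : |B t| < |A t|) (hAa : |A t| < σ0sq * η / 3) :
    (∀ i : ℕ, A (t + 2*i) = A t ∧
      A (t + 2*i + 1) = A t - Real.sign (A t) * (σ0sq * η)) ∧
    (∀ t' ≥ t, B t' = B t) ∧
    (∀ i : ℕ, Real.sign (A (t + 2*i + 1)) = - Real.sign (A (t + 2*i))) ∧
    (∀ t' ≥ t, |A t'| ≤ σ0sq * η) := by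
  obtain ⟨hA, hB⟩ := hdyn
  have haPos : 0 < σ0sq * η := mul_pos h0 hη
  have hb1 : B t ≤ |B t| := le_abs_self _
  have hb2 : -|B t| ≤ B t := neg_abs_le _
  have key : ∀ u, A u = A t → B u = B t →
      A (u+1) = A t - Real.sign (A t) * (σ0sq * η) ∧ B (u+1) = B t ∧
      A (u+2) = A t ∧ B (u+2) = B t ∧
      Real.sign (A (u+1)) = - Real.sign (A t) := by
    intro u hAu hBu
    rcases lt_trichotomy (A t) 0 with hneg | hzero | hpos
    · have hs : Real.sign (A t) = -1 := Real.sign_of_neg hneg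
      have habs : |A t| = -(A t) := abs_of_neg hneg
      have hBA' : |B t| < -(A t) := habs ▸ hBA
      have hAa' : -(A t) < σ0sq * η / 3 := habs ▸ hAa
      have h1 : A t + B t < 0 := by linarith
      have h2 : A t - B t < 0 := by linarith
      have e1 : A (u+1) = A t + σ0sq * η := by
        rw [hA u, hAu, hBu, hs, Real.sign_of_neg h1, Real.sign_of_neg h2]; ring
      have e2 : B (u+1) = B t := by
        rw [hB u, hAu, hBu, Real.sign_of_neg h1, Real.sign_of_neg h2]; ring
      have p0 : 0 < A t + σ0sq * η := by linarith
      have p1 : 0 < A t + σ0sq * η + B t := by linarith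
      have p2 : 0 < A t + σ0sq * η - B t := by linarith
      have hs1 : Real.sign (A (u+1)) = 1 := e1 ▸ Real.sign_of_pos p0
      refine ⟨by rw [e1, hs]; ring, e2, ?_, ?_, by rw [hs1, hs]; ring⟩
      · have : A (u+1+1) = A (u+1) - σ0sq * η / 3 *
            (Real.sign (A (u+1) + B (u+1)) + Real.sign (A (u+1)) +
             Real.sign (A (u+1) - B (u+1))) := hA (u+1)
        rw [e1, e2, Real.sign_of_pos p1, Real.sign_of_pos p0, Real.sign_of_pos p2] at this
        show A (u+1+1) = A t
        rw [this]; ring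
      · have : B (u+1+1) = B (u+1) - σ1sq * η / 2 *
            (Real.sign (A (u+1) + B (u+1)) - Real.sign (A (u+1) - B (u+1))) := hB (u+1)
        rw [e1, e2, Real.sign_of_pos p1, Real.sign_of_pos p2] at this
        show B (u+1+1) = B t
        rw [this]; ring
    · exfalso
      rw [hzero, abs_zero] at hBA
      linarith [abs_nonneg (B t)]
    · have hs : Real.sign (A t) = 1 := Real.sign_of_pos hpos
      have habs : |A t| = A t := abs_of_pos hpos
      have hBA' : |B t| < A t := habs ▸ hBA
      have hAa' : A t < σ0sq * η / 3 := habs ▸ hAa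
      have h1 : 0 < A t + B t := by linarith
      have h2 : 0 < A t - B t := by linarith
      have e1 : A (u+1) = A t - σ0sq * η := by
        rw [hA u, hAu, hBu, hs, Real.sign_of_pos h1, Real.sign_of_pos h2]; ring
      have e2 : B (u+1) = B t := by
        rw [hB u, hAu, hBu, Real.sign_of_pos h1, Real.sign_of_pos h2]; ring
      have p0 : A t - σ0sq * η < 0 := by linarith
      have p1 : A t - σ0sq * η + B t < 0 := by linarith
      have p2 : A t - σ0sq * η - B t < 0 := by linarith
      have hs1 : Real.sign (A (u+1)) = -1 := e1 ▸ Real.sign_of_neg p0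
      refine ⟨by rw [e1, hs]; ring, e2, ?_, ?_, by rw [hs1, hs]⟩
      · have : A (u+1+1) = A (u+1) - σ0sq * η / 3 *
            (Real.sign (A (u+1) + B (u+1)) + Real.sign (A (u+1)) +
             Real.sign (A (u+1) - B (u+1))) := hA (u+1)
        rw [e1, e2, Real.sign_of_neg p1, Real.sign_of_neg p0, Real.sign_of_neg p2] at this
        show A (u+1+1) = A t
        rw [this]; ring
      · have : B (u+1+1) = B (u+1) - σ1sq * η / 2 *
            (Real.sign (A (u+1) + B (u+1)) - Real.sign (A (u+1) - B (u+1))) := hB (u+1)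
        rw [e1, e2, Real.sign_of_neg p1, Real.sign_of_neg p2] at this
        show B (u+1+1) = B t
        rw [this]; ring
  have main : ∀ i : ℕ, A (t + 2*i) = A t ∧ B (t + 2*i) = B t := by
    intro i
    induction i with
    | zero => simp
    | succ n ih =>
      obtain ⟨hAn, hBn⟩ := ih
      obtain ⟨_, _, h3, h4, _⟩ := key (t + 2*n) hAn hBn
      constructor
      · have : t + 2*(n+1) = t + 2*n + 2 := by ring
        rw [this]; exact h3
      · have : t + 2*(n+1) = t + 2*n + 2 := by ring
        rw [this]; exact h4
  have odd' : ∀ i : ℕ, A (t + 2*i + 1) = A t - Real.sign (A t) * (σ0sq * η) ∧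
      B (t + 2*i + 1) = B t ∧ Real.sign (A (t + 2*i + 1)) = - Real.sign (A t) := by
    intro i
    obtain ⟨hAn, hBn⟩ := main i
    obtain ⟨h1, h2, _, _, h5⟩ := key (t + 2*i) hAn hBn
    exact ⟨h1, h2, h5⟩
  have haOdd : |A t - Real.sign (A t) * (σ0sq * η)| ≤ σ0sq * η := by
    rcases lt_trichotomy (A t) 0 with hneg | hzero | hpos
    · rw [Real.sign_of_neg hneg]
      have habs : -(A t) < σ0sq * η / 3 := by
        have := abs_of_neg hneg; linarith [hAa, this.symm.trans_lt hAa]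
      rw [abs_le]; constructor <;> nlinarith [abs_of_neg hneg, hAa]
    · exfalso; rw [hzero, abs_zero] at hBA; linarith [abs_nonneg (B t)]
    · rw [Real.sign_of_pos hpos]
      rw [abs_le]; constructor <;> nlinarith [abs_of_pos hpos, hAa]
  refine ⟨fun i => ⟨(main i).1, (odd' i).1⟩, ?_, ?_, ?_⟩
  · intro t' ht'
    obtain ⟨k, rfl⟩ := Nat.exists_eq_add_of_le ht'
    rcases Nat.even_or_odd k with ⟨m, hm⟩ | ⟨m, hm⟩
    · have : t + k = t + 2*m := by omega
      rw [this]; exact (main m).2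
    · have : t + k = t + 2*m + 1 := by omega
      rw [this]; exact (odd' m).2.1
  · intro i
    rw [(odd' i).2.2, (main i).1]
  · intro t' ht'
    obtain ⟨k, rfl⟩ := Nat.exists_eq_add_of_le ht'
    rcases Nat.even_or_odd k with ⟨m, hm⟩ | ⟨m, hm⟩
    · have : t + k = t + 2*m := by omega
      rw [this, (main m).1]
      linarith [hAa, haPos]
    · have : t + k = t + 2*m + 1 := by omega
      rw [this, (odd' m).1]; exact haOdd
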